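/- There is no self-adjoint dephased complex Hadamard matrix H ∈ M₆(ℂ) whose diagonal is (1, −1, 1, 1, 1, 1). -/

import Mathlib

open Complex Matrix ComplexConjugate

/-- A complex Hadamard matrix of order `n`: all entries of absolute value 1
and pairwise orthogonal rows, i.e. `H Hᴴ = n·1`. -/
def IsHadamard {n : ℕ} (H : Matrix (Fin n) (Fin n) ℂ) : Prop :=
  (∀ i j, ‖H i j‖ = 1) ∧ H * Hᴴ = (n : ℂ) • 1

/-- A matrix is dephased if its first row and first column consist of 1's. -/
def IsDephased {n : ℕ} [NeZero n] (H : Matrix (Fin n) (Fin n) ℂ) : Prop :=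
  ∀ k, H 0 k = 1 ∧ H k 0 = 1

private lemma conj_mul_aux {M : Type*} [Monoid M] {a b : M} (h : a * b = 1) (x y : M) :
    (b * x * a) * (b * y * a) = b * (x * y) * a := by
  calc (b * x * a) * (b * y * a) = b * (x * ((a * b) * y)) * a := by simp [mul_assoc]
    _ = b * (x * y) * a := by rw [h, one_mul]

private lemma conj_eq_aux {M : Type*} [Monoid M] {a b : M} (h1 : a * b = 1) {x y : M}
    (h : b * x * a = y) : x = a * y * b := by
  subst h
  calc x = (a * b) * x * (a * b) := by rw [h1, one_mul, mul_one]
    _ = a * (b * x * a) * b := by simp [mul_assoc]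

/-- There is no self-adjoint dephased complex Hadamard matrix in
M₆(ℂ) whose diagonal is (1, (-1), 1, 1, 1, 1). -/
theorem no_selfAdjoint_dephased_diag_stmt8 :
    ¬ ∃ H : Matrix (Fin 6) (Fin 6) ℂ,
      _root_.IsHadamard H ∧ Hᴴ = H ∧ IsDephased H ∧
      H 0 0 = 1 ∧ H 1 1 = (-1) ∧ H 2 2 = 1 ∧
      H 3 3 = 1 ∧ H 4 4 = 1 ∧ H 5 5 = 1 := by
  rintro ⟨H, ⟨-, hmul⟩, hherm, -, h00, h11, h22, h33, h44, h55⟩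
  have hH : H.IsHermitian := hherm
  rw [hherm] at hmul
  have hmul6 : H * H = (6 : ℂ) • 1 := by exact_mod_cast hmul
  -- trace H = 4
  have htr : Matrix.trace H = 4 := by
    simp [Matrix.trace, Matrix.diag, Fin.sum_univ_six, h00, h11, h22, h33, h44, h55]
    ring
  set U : Matrix (Fin 6) (Fin 6) ℂ := (hH.eigenvectorUnitary : Matrix (Fin 6) (Fin 6) ℂ) with hU
  set D : Matrix (Fin 6) (Fin 6) ℂ := diagonal (RCLike.ofReal ∘ hH.eigenvalues) with hD
  have hspec : H = U * D * star U := hH.spectral_theorem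
  have hUU : star U * U = 1 := Unitary.coe_star_mul_self hH.eigenvectorUnitary
  -- trace = sum of eigenvalues
  have htr2 : Matrix.trace H = ∑ i, ((hH.eigenvalues i : ℝ) : ℂ) := by
    conv_lhs => rw [hspec]
    rw [Matrix.trace_mul_cycle, hUU, one_mul, hD, Matrix.trace_diagonal]
    simp
  -- D * D = 6 • 1
  have hDD : D * D = (6 : ℂ) • 1 := by
    have h6 : U * (D * D) * star U = (6 : ℂ) • 1 := by
      rw [← conj_mul_aux hUU, ← hspec, hmul6]
    have := conj_eq_aux hUU h6
    rw [this]
    simp [Matrix.mul_smul, Matrix.smul_mul, hUU]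
  -- each eigenvalue squares to 6
  have hev2 : ∀ i, (hH.eigenvalues i) ^ 2 = 6 := by
    intro i
    have h := congrFun (congrFun hDD i) i
    simp [hD, diagonal_mul_diagonal, Matrix.one_apply, Matrix.smul_apply] at h
    have h2 : ((hH.eigenvalues i : ℂ)) ^ 2 = 6 := by rw [sq]; exact_mod_cast h
    exact_mod_cast h2
  -- each eigenvalue is ±√6
  have hpm : ∀ i, hH.eigenvalues i = Real.sqrt 6 ∨ hH.eigenvalues i = -Real.sqrt 6 := by
    intro i
    have h6 : (Real.sqrt 6) ^ 2 = 6 := Real.sq_sqrt (by norm_num)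
    have : (hH.eigenvalues i - Real.sqrt 6) * (hH.eigenvalues i + Real.sqrt 6) = 0 := by
      have := hev2 i; nlinarith [hev2 i]
    rcases mul_eq_zero.mp this with h | h
    · left; linarith
    · right; linarith
  -- sum of eigenvalues = 4 (real)
  have hsum : ∑ i, hH.eigenvalues i = 4 := by
    have : ((∑ i, hH.eigenvalues i : ℝ) : ℂ) = 4 := by
      push_cast
      rw [← htr2, htr]
    exact_mod_cast this
  -- counting
  classical
  set s : Finset (Fin 6) := Finset.univ.filter (fun i => hH.eigenvalues i = Real.sqrt 6) with hs
  have hsplit : ∑ i, hH.eigenvalues i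
      = (s.card : ℝ) * Real.sqrt 6 - ((6 - s.card : ℕ) : ℝ) * Real.sqrt 6 := by
    rw [← Finset.sum_filter_add_sum_filter_not Finset.univ
      (fun i => hH.eigenvalues i = Real.sqrt 6)]
    have h1 : ∑ i ∈ s, hH.eigenvalues i = (s.card : ℝ) * Real.sqrt 6 := by
      rw [Finset.sum_congr rfl (fun i hi => (Finset.mem_filter.mp hi).2)]
      simp [mul_comm, hs]
    have h2 : ∑ i ∈ Finset.univ.filter (fun i => ¬ hH.eigenvalues i = Real.sqrt 6),
        hH.eigenvalues i = ((6 - s.card : ℕ) : ℝ) * (-Real.sqrt 6) := by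
      rw [Finset.sum_congr rfl (fun i hi => by
        rcases hpm i with h | h
        · exact absurd h (Finset.mem_filter.mp hi).2
        · exact h)]
      rw [Finset.sum_const, nsmul_eq_mul]
      congr 1
      rw [Finset.filter_not, Finset.card_sdiff_of_subset (Finset.filter_subset _ _)]
      simp [hs]
    rw [h1, h2]; ring
  have hcard : s.card ≤ 6 := by
    have := Finset.card_le_card (Finset.filter_subset
      (fun i => hH.eigenvalues i = Real.sqrt 6) Finset.univ)
    simpa using this
  rw [hsum] at hsplit
  have h6 : (Real.sqrt 6) ^ 2 = 6 := Real.sq_sqrt (by norm_num)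
  have hpos : (0:ℝ) ≤ Real.sqrt 6 := Real.sqrt_nonneg 6
  interval_cases h : s.card <;> (push_cast at hsplit; nlinarith [h6, hpos])
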